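/- arXiv:2101.01109 — 3 statements merged into one kernel-verified Lean document; each statement's English description precedes it below -/
import Mathlib

section
/- Let n ≥ 1 and s ∈ ℝ. There exists a constant c > 0, depending only on n and s, such that for every family (u_j)_{j ∈ ℤ} of Schwartz functions on ℝⁿ with supp 𝓕u_j ⊆ {ξ : 2^{j−1} ≤ |ξ| ≤ 3·2^{j−1}} for every j, and with M := sup_{j ∈ ℤ} 2^{js} ‖u_j‖_{L¹(ℝⁿ)} < ∞, the function v(ξ) := Σ_{j ∈ ℤ} 𝓕u_j(ξ) (a sum with only finitely many nonzero terms for each ξ ≠ 0) satisfies |ξ|^s |v(ξ)| ≤ c · M for every ξ ≠ 0. -/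
open MeasureTheory SchwartzMap Real FourierTransform ENNReal

/-- Endpoint case `r = 1`, `p = ∞` of the Szasz estimate: there is
`c = c(n,s) > 0` such that for every family `(u_j)_{j ∈ ℤ}` of Schwartz functions with
`supp 𝓕 u_j ⊆ {2^{j-1} ≤ |ξ| ≤ 3·2^{j-1}}` and `M := sup_j 2^{js} ‖u_j‖_{L¹} < ∞`,
the function `v(ξ) = Σ_j 𝓕 u_j(ξ)` satisfies `|ξ|^s |v(ξ)| ≤ c·M` for every `ξ ≠ 0`. -/
theorem stmt2 (n : ℕ) (hn : 1 ≤ n) (s : ℝ) :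
    ∃ c > 0, ∀ (u : ℤ → SchwartzMap (EuclideanSpace ℝ (Fin n)) ℂ),
      (∀ j : ℤ, Function.support (𝓕 (⇑(u j))) ⊆
        {ξ : EuclideanSpace ℝ (Fin n) | (2:ℝ) ^ (j-1) ≤ ‖ξ‖ ∧ ‖ξ‖ ≤ 3 * (2:ℝ) ^ (j-1)}) →
      ∀ M : ℝ≥0∞,
        (M = ⨆ j : ℤ, ENNReal.ofReal ((2:ℝ) ^ ((j:ℝ) * s)) * eLpNorm (⇑(u j)) 1 volume) →
        M < ∞ →
      ∀ v : EuclideanSpace ℝ (Fin n) → ℂ,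
        (v = fun ξ => ∑' j : ℤ, 𝓕 (⇑(u j)) ξ) →
        ∀ ξ : EuclideanSpace ℝ (Fin n), ξ ≠ 0 →
          ENNReal.ofReal (‖ξ‖ ^ s) * (‖v ξ‖₊ : ℝ≥0∞) ≤ ENNReal.ofReal c * M := by
  classical
  set C : ℝ := (2:ℝ) ^ |s| with hCdef
  have hCpos : 0 < C := Real.rpow_pos_of_pos two_pos _
  refine ⟨2 * C, by positivity, ?_⟩
  intro u hsupp M hM hMlt v hv ξ hξ
  set t : ℝ := ‖ξ‖ with ht
  have htpos : 0 < t := norm_pos_iff.mpr hξ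
  have h2 : (1:ℝ) < 2 := one_lt_two
  -- per-term bound
  have key : ∀ j : ℤ, ENNReal.ofReal (t ^ s) * (‖𝓕 (⇑(u j)) ξ‖₊ : ℝ≥0∞)
      ≤ ENNReal.ofReal C * M := by
    intro j
    by_cases hz : 𝓕 (⇑(u j)) ξ = 0
    · simp [hz]
    · obtain ⟨ha1, ha2⟩ := hsupp j (Function.mem_support.mpr hz)
      have hb : (0:ℝ) < (2:ℝ) ^ (j : ℤ) := zpow_pos two_pos _
      have hsplit : (2:ℝ) ^ (j - 1 : ℤ) = (2:ℝ) ^ (j : ℤ) / 2 := by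
        rw [zpow_sub₀ (by norm_num : (2:ℝ) ≠ 0)]; simp
      have hx1 : (1:ℝ) / 2 ≤ t / (2:ℝ) ^ (j : ℤ) := by
        rw [hsplit] at ha1
        rw [div_le_div_iff₀ (by norm_num) hb]
        nlinarith
      have hx2 : t / (2:ℝ) ^ (j : ℤ) ≤ 2 := by
        rw [hsplit] at ha2
        rw [div_le_iff₀ hb]
        nlinarith
      have hxC : (t / (2:ℝ) ^ (j : ℤ)) ^ s ≤ C := by
        rcases le_or_gt 0 s with hs | hs
        · calc (t / (2:ℝ) ^ (j : ℤ)) ^ s ≤ (2:ℝ) ^ s :=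
              Real.rpow_le_rpow (by positivity) hx2 hs
            _ = C := by rw [hCdef, abs_of_nonneg hs]
        · calc (t / (2:ℝ) ^ (j : ℤ)) ^ s ≤ ((1:ℝ)/2) ^ s :=
              Real.rpow_le_rpow_of_nonpos (by norm_num) hx1 hs.le
            _ = C := by
              rw [hCdef, abs_of_neg hs, one_div, ← Real.rpow_neg_one,
                ← Real.rpow_mul (by norm_num)]
              ring_nf
      have hbs : ((2:ℝ) ^ (j : ℤ)) ^ s = (2:ℝ) ^ ((j:ℝ) * s) := by
        rw [← Real.rpow_intCast 2 j, ← Real.rpow_mul (by norm_num)]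
      have hts : t ^ s ≤ C * (2:ℝ) ^ ((j:ℝ) * s) := by
        have hdiv : (t / (2:ℝ) ^ (j : ℤ)) ^ s = t ^ s / ((2:ℝ) ^ (j : ℤ)) ^ s :=
          Real.div_rpow htpos.le hb.le _
        have hbspos : (0:ℝ) < ((2:ℝ) ^ (j : ℤ)) ^ s := Real.rpow_pos_of_pos hb _
        rw [hdiv, div_le_iff₀ hbspos] at hxC
        calc t ^ s ≤ C * ((2:ℝ) ^ (j : ℤ)) ^ s := hxC
          _ = C * (2:ℝ) ^ ((j:ℝ) * s) := by rw [hbs]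
      -- Fourier bound by L¹ norm
      have hF : (‖𝓕 (⇑(u j)) ξ‖₊ : ℝ≥0∞) ≤ eLpNorm (⇑(u j)) 1 volume := by
        calc (‖𝓕 (⇑(u j)) ξ‖₊ : ℝ≥0∞) = ENNReal.ofReal ‖𝓕 (⇑(u j)) ξ‖ :=
            (ofReal_norm _).symm
          _ ≤ ENNReal.ofReal (∫ x, ‖(u j) x‖) := ENNReal.ofReal_le_ofReal
              (VectorFourier.norm_fourierIntegral_le_integral_norm _ _ _ _ _)
          _ = ∫⁻ x, ‖(u j) x‖₊ ∂volume :=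
              ofReal_integral_norm_eq_lintegral_enorm ((u j).integrable)
          _ = eLpNorm (⇑(u j)) 1 volume := (eLpNorm_one_eq_lintegral_enorm (f := ⇑(u j))).symm
      have hMj : ENNReal.ofReal ((2:ℝ) ^ ((j:ℝ) * s)) * eLpNorm (⇑(u j)) 1 volume ≤ M := by
        rw [hM]
        exact le_iSup (fun j : ℤ =>
          ENNReal.ofReal ((2:ℝ) ^ ((j:ℝ) * s)) * eLpNorm (⇑(u j)) 1 volume) j
      calc ENNReal.ofReal (t ^ s) * (‖𝓕 (⇑(u j)) ξ‖₊ : ℝ≥0∞)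
          ≤ ENNReal.ofReal (C * (2:ℝ) ^ ((j:ℝ) * s)) * eLpNorm (⇑(u j)) 1 volume :=
            mul_le_mul (ENNReal.ofReal_le_ofReal hts) hF zero_le zero_le
        _ = ENNReal.ofReal C * (ENNReal.ofReal ((2:ℝ) ^ ((j:ℝ) * s)) *
              eLpNorm (⇑(u j)) 1 volume) := by
            rw [ENNReal.ofReal_mul hCpos.le, mul_assoc]
        _ ≤ ENNReal.ofReal C * M := mul_le_mul_right hMj _
  -- the sum has at most two nonzero terms
  set m : ℤ := ⌈Real.logb 2 (t / 3)⌉ + 1 with hm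
  have hlogb3 : Real.logb 2 3 < 2 := by
    rw [Real.logb_lt_iff_lt_rpow h2 (by norm_num)]
    have : (2:ℝ) ^ (2:ℝ) = 4 := by
      rw [show (2:ℝ) = ((2:ℕ):ℝ) from by norm_num, Real.rpow_natCast]
      norm_num
    rw [this]; norm_num
  have hzero : ∀ j ∈ Function.support (fun j : ℤ => 𝓕 (⇑(u j)) ξ),
      j ∈ ({m, m + 1} : Finset ℤ) := by
    intro j hj
    obtain ⟨ha1, ha2⟩ := hsupp j (Function.mem_support.mpr hj)
    have ha1' : ((j:ℝ) - 1) ≤ Real.logb 2 t := by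
      rw [Real.le_logb_iff_rpow_le h2 htpos]
      calc (2:ℝ) ^ ((j:ℝ) - 1) = (2:ℝ) ^ ((j - 1 : ℤ) : ℝ) := by push_cast; ring_nf
        _ = (2:ℝ) ^ (j - 1 : ℤ) := Real.rpow_intCast 2 _
        _ ≤ t := ha1
    have ha2' : Real.logb 2 (t / 3) ≤ (j:ℝ) - 1 := by
      rw [Real.logb_le_iff_le_rpow h2 (by positivity)]
      calc t / 3 ≤ (2:ℝ) ^ (j - 1 : ℤ) := by
            rw [div_le_iff₀ (by norm_num : (0:ℝ) < 3)]; linarith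
        _ = (2:ℝ) ^ ((j - 1 : ℤ) : ℝ) := (Real.rpow_intCast 2 _).symm
        _ = (2:ℝ) ^ ((j:ℝ) - 1) := by push_cast; ring_nf
    have hlower : m ≤ j := by
      have : (⌈Real.logb 2 (t / 3)⌉ : ℤ) ≤ j - 1 := by
        rw [Int.ceil_le]; push_cast; linarith
      omega
    have hupper : j ≤ m + 1 := by
      have hsplitlog : Real.logb 2 t = Real.logb 2 (t / 3) + Real.logb 2 3 := by
        rw [← Real.logb_mul (by positivity) (by norm_num)]
        norm_num
      have hceil : Real.logb 2 (t / 3) ≤ (⌈Real.logb 2 (t / 3)⌉ : ℝ) := Int.le_ceil _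
      have : (j:ℝ) < (⌈Real.logb 2 (t / 3)⌉ : ℝ) + 3 := by
        rw [hsplitlog] at ha1'
        linarith
      have : j < ⌈Real.logb 2 (t / 3)⌉ + 3 := by exact_mod_cast this
      omega
    simp only [Finset.mem_insert, Finset.mem_singleton]
    omega
  have hvξ : v ξ = 𝓕 (⇑(u m)) ξ + 𝓕 (⇑(u (m + 1))) ξ := by
    simp only [hv]
    have := tsum_eq_sum (L := SummationFilter.unconditional ℤ) (s := ({m, m + 1} : Finset ℤ))
      (f := fun j : ℤ => 𝓕 (⇑(u j)) ξ)
      (fun b hb => by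
        by_contra hne
        exact hb (hzero b (Function.mem_support.mpr hne)))
    rw [this, Finset.sum_insert (by simp), Finset.sum_singleton]
  calc ENNReal.ofReal (t ^ s) * (‖v ξ‖₊ : ℝ≥0∞)
      ≤ ENNReal.ofReal (t ^ s) *
        ((‖𝓕 (⇑(u m)) ξ‖₊ : ℝ≥0∞) + (‖𝓕 (⇑(u (m + 1))) ξ‖₊ : ℝ≥0∞)) := by
        apply mul_le_mul_right
        rw [hvξ]
        exact_mod_cast nnnorm_add_le _ _
    _ = ENNReal.ofReal (t ^ s) * (‖𝓕 (⇑(u m)) ξ‖₊ : ℝ≥0∞) +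
        ENNReal.ofReal (t ^ s) * (‖𝓕 (⇑(u (m + 1))) ξ‖₊ : ℝ≥0∞) := by ring
    _ ≤ ENNReal.ofReal C * M + ENNReal.ofReal C * M := add_le_add (key m) (key (m + 1))
    _ = ENNReal.ofReal (2 * C) * M := by
        rw [ENNReal.ofReal_mul (by norm_num : (0:ℝ) ≤ 2)]
        rw [ENNReal.ofReal_ofNat]
        ring
end

section
/- Let n ≥ 1, 0 < p < ∞, and θ ∈ ℝ. Let φ be a Schwartz function on ℝⁿ such that 𝓕φ is not identically zero and supp 𝓕φ ⊆ {ξ : |ξ| ≤ 1/2}. Define F(ξ) := Σ_{k=1}^∞ k · 2^{−kθ} · 𝓕φ(ξ − 2^k e₁), where e₁ = (1,0,…,0); for each ξ at most one term of the sum is nonzero, since the supports of the translates are pairwise disjoint. Then ∫_{ℝⁿ} |ξ|^{θp} |F(ξ)|^p dξ = ∞. -/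
open MeasureTheory SchwartzMap Real FourierTransform ENNReal

/-- **Statement 13.** Counterexample for `p > r'`: if `𝓕φ ≠ 0` is supported in the ball
`{|ξ| ≤ 1/2}` and `F(ξ) = Σ_{k≥1} k · 2^{-kθ} 𝓕φ(ξ - 2^k e₁)`, then
`∫ |ξ|^{θp} |F(ξ)|^p dξ = ∞`. -/
theorem stmt13 (n : ℕ) (hn : 1 ≤ n) (p θ : ℝ) (hp : 0 < p)
    (φ : SchwartzMap (EuclideanSpace ℝ (Fin n)) ℂ)
    (hφ0 : 𝓕 (⇑φ) ≠ 0)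
    (hsupp : Function.support (𝓕 (⇑φ)) ⊆
      {ξ : EuclideanSpace ℝ (Fin n) | ‖ξ‖ ≤ 1/2})
    (e₁ : EuclideanSpace ℝ (Fin n))
    (he₁ : e₁ = EuclideanSpace.single (⟨0, hn⟩ : Fin n) (1:ℝ))
    (F : EuclideanSpace ℝ (Fin n) → ℂ)
    (hF : F = fun ξ => ∑' k : ℕ,
      (((k:ℝ) + 1) * (2:ℝ) ^ (-(((k:ℝ) + 1)) * θ) : ℝ) *
        𝓕 (⇑φ) (ξ - (2:ℝ) ^ (k + 1) • e₁)) :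
    (∫⁻ ξ : EuclideanSpace ℝ (Fin n),
        ENNReal.ofReal (‖ξ‖ ^ (θ * p)) * (‖F ξ‖₊ : ℝ≥0∞) ^ p) = ∞ := by
  set f : EuclideanSpace ℝ (Fin n) → ℂ := 𝓕 ⇑φ with hfdef
  have hcont : Continuous f := by
    rw [hfdef, ← SchwartzMap.fourier_coe φ]
    exact (𝓕 φ).continuous
  have he1 : ‖e₁‖ = 1 := by rw [he₁]; simp
  set c : ℕ → ℝ := fun k => ((k:ℝ) + 1) * (2:ℝ) ^ (-(((k:ℝ) + 1)) * θ) with hc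
  set a : ℕ → EuclideanSpace ℝ (Fin n) := fun k => (2:ℝ) ^ (k + 1) • e₁ with ha
  set S : ℕ → Set (EuclideanSpace ℝ (Fin n)) := fun k => Metric.closedBall (a k) (1/2) with hS
  have hSm : ∀ k, MeasurableSet (S k) := fun k => measurableSet_closedBall
  -- separation of centers
  have hsep : ∀ j k : ℕ, j ≠ k → (2:ℝ) ≤ dist (a j) (a k) := by
    have key : ∀ j k : ℕ, j < k → (2:ℝ) ≤ (2:ℝ) ^ (k + 1) - (2:ℝ) ^ (j + 1) := by
      intro j k hjk
      have h1 : (2:ℝ) ^ (j + 1) ≤ (2:ℝ) ^ k :=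
        pow_le_pow_right₀ (by norm_num) (by omega)
      have h2 : (2:ℝ) ^ 1 ≤ (2:ℝ) ^ k := pow_le_pow_right₀ (by norm_num) (by omega)
      have h3 : (2:ℝ) ^ (k + 1) = 2 * 2 ^ k := by ring
      nlinarith
    intro j k hjk
    have : dist (a j) (a k) = |(2:ℝ) ^ (j + 1) - (2:ℝ) ^ (k + 1)| := by
      rw [ha, dist_eq_norm, ← sub_smul, norm_smul, he1, mul_one, Real.norm_eq_abs]
    rw [this]
    rcases lt_or_gt_of_ne hjk with h | h
    · rw [abs_sub_comm, abs_of_nonneg (by linarith [key j k h])]; exact key j k h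
    · rw [abs_of_nonneg (by linarith [key k j h])]; exact key k j h
  have hdisj : Pairwise (Function.onFun Disjoint S) := by
    intro j k hjk
    exact Metric.closedBall_disjoint_closedBall (by linarith [hsep j k hjk])
  -- f vanishes away from the support ball
  have hvan : ∀ (ξ : EuclideanSpace ℝ (Fin n)) (k j : ℕ), ξ ∈ S k → j ≠ k → f (ξ - a j) = 0 := by
    intro ξ k j hξ hjk
    by_contra h
    have h1 : ‖ξ - a j‖ ≤ 1/2 := hsupp h
    have h2 : ‖ξ - a k‖ ≤ 1/2 := by
      simpa [hS, Metric.mem_closedBall, dist_eq_norm] using hξ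
    have : dist (a j) (a k) ≤ 1 := by
      have := norm_sub_le (ξ - a j) (ξ - a k)
      simp only [_root_.sub_sub_sub_cancel_left] at this
      rw [dist_eq_norm, ← norm_neg, neg_sub]
      linarith
    linarith [hsep j k hjk]
  -- value of F on S k
  have hFval : ∀ (k : ℕ) (ξ : EuclideanSpace ℝ (Fin n)), ξ ∈ S k → F ξ = (c k : ℂ) * f (ξ - a k) := by
    intro k ξ hξ
    rw [hF]
    exact tsum_eq_single k (fun j hjk => by rw [hvan ξ k j hξ hjk, mul_zero])
  -- the basic positive integral
  set g : EuclideanSpace ℝ (Fin n) → ℝ≥0∞ := fun η => (‖f η‖₊ : ℝ≥0∞) ^ p with hg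
  have hgm : Measurable g := by
    apply Measurable.pow_const
    exact (hcont.measurable.nnnorm).coe_nnreal_ennreal
  set I := ∫⁻ η, g η with hIdef
  have hI : 0 < I := by
    rw [hIdef, lintegral_pos_iff_support hgm]
    have hssub : Function.support f ⊆ Function.support g := by
      intro η hη
      simp only [Function.mem_support, hg] at hη ⊢
      intro h
      apply hη
      rw [ENNReal.rpow_eq_zero_iff] at h
      rcases h with ⟨h0, _⟩ | ⟨h0, _⟩
      · simpa using h0
      · exact absurd h0 ENNReal.coe_ne_top
    have hopen : IsOpen (Function.support f) := by
      rw [Function.support_eq_preimage]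
      exact isOpen_compl_singleton.preimage hcont
    obtain ⟨x, hx⟩ := Function.ne_iff.mp hφ0
    have h1 : 0 < volume (Function.support f) :=
      hopen.measure_pos volume ⟨x, hx⟩
    exact h1.trans_le (measure_mono hssub)
  set ε : ℝ≥0∞ := ENNReal.ofReal ((2:ℝ) ^ (-|θ * p|)) with hε
  have hεpos : 0 < ε := ENNReal.ofReal_pos.mpr (Real.rpow_pos_of_pos two_pos _)
  -- pointwise lower bound on S k
  have hpt : ∀ (k : ℕ) (ξ : EuclideanSpace ℝ (Fin n)), ξ ∈ S k →
      ε * g (ξ - a k) ≤ ENNReal.ofReal (‖ξ‖ ^ (θ * p)) * (‖F ξ‖₊ : ℝ≥0∞) ^ p := by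
    intro k ξ hξ
    have hck : 0 < c k := by
      rw [hc]
      exact mul_pos (by positivity) (Real.rpow_pos_of_pos two_pos _)
    have hFn : (‖F ξ‖₊ : ℝ≥0∞) ^ p = ENNReal.ofReal (c k) ^ p * g (ξ - a k) := by
      rw [hFval k ξ hξ, nnnorm_mul, ENNReal.coe_mul,
        ENNReal.mul_rpow_of_nonneg _ _ hp.le]
      congr 2
      rw [Complex.nnnorm_real]; exact Real.enorm_eq_ofReal hck.le
    rw [hFn, ← mul_assoc]
    apply mul_le_mul_left
    -- real estimates
    have hξd : ‖ξ - a k‖ ≤ 1/2 := by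
      simpa [hS, Metric.mem_closedBall, dist_eq_norm] using hξ
    have hak : ‖a k‖ = 2 ^ (k+1) := by
      rw [ha, norm_smul, he1, mul_one, Real.norm_eq_abs, abs_of_pos (by positivity)]
    have h2k1 : ((2:ℝ)) ^ (k+1) = 2 * 2 ^ k := by ring
    have h1le : (1:ℝ) ≤ 2 ^ k := one_le_pow₀ (by norm_num)
    have hlow : (2:ℝ) ^ k ≤ ‖ξ‖ := by
      have h := norm_sub_norm_le (a k) ξ
      have h' : ‖a k - ξ‖ = ‖ξ - a k‖ := by rw [← norm_neg, neg_sub]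
      rw [hak, h'] at h
      linarith
    have hhigh : ‖ξ‖ ≤ (2:ℝ) ^ (k+2) := by
      have h := norm_le_norm_add_norm_sub' ξ (a k)
      rw [hak] at h
      have : ((2:ℝ)) ^ (k+2) = 4 * 2 ^ k := by ring
      linarith
    have hξpos : (0:ℝ) < ‖ξ‖ := lt_of_lt_of_le (by positivity) hlow
    -- log bounds
    have hlog : |Real.log ‖ξ‖ - ((k:ℝ)+1) * Real.log 2| ≤ Real.log 2 := by
      have l1 : Real.log ‖ξ‖ ≤ ((k:ℝ)+2) * Real.log 2 := by
        have := Real.log_le_log hξpos hhigh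
        rwa [Real.log_pow, Nat.cast_add, Nat.cast_ofNat] at this
      have l2 : (k:ℝ) * Real.log 2 ≤ Real.log ‖ξ‖ := by
        have := Real.log_le_log (by positivity) hlow
        rwa [Real.log_pow] at this
      rw [abs_le]
      constructor <;> linarith
    have key : (2:ℝ) ^ (-|θ*p|) * (2:ℝ) ^ (((k:ℝ)+1)*(θ*p)) ≤ ‖ξ‖ ^ (θ * p) := by
      rw [Real.rpow_def_of_pos two_pos, Real.rpow_def_of_pos two_pos,
        Real.rpow_def_of_pos hξpos, ← Real.exp_add]
      apply Real.exp_le_exp.mpr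
      have habs : |(θ*p) * (Real.log ‖ξ‖ - ((k:ℝ)+1)*Real.log 2)| ≤ |θ*p| * Real.log 2 := by
        rw [abs_mul]
        exact mul_le_mul_of_nonneg_left hlog (abs_nonneg _)
      have h1 := neg_abs_le ((θ*p) * (Real.log ‖ξ‖ - ((k:ℝ)+1)*Real.log 2))
      nlinarith [h1, habs]
    have hckp : (2:ℝ) ^ ((-(((k:ℝ)+1))*θ)*p) ≤ (c k) ^ p := by
      have hb : (2:ℝ) ^ (-(((k:ℝ)+1))*θ) ≤ c k := by
        show (2:ℝ) ^ (-(((k:ℝ)+1))*θ) ≤ ((k:ℝ)+1) * (2:ℝ) ^ (-(((k:ℝ)+1))*θ)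
        nlinarith [Real.rpow_pos_of_pos two_pos (-(((k:ℝ)+1))*θ), Nat.cast_nonneg (α := ℝ) k]
      calc (2:ℝ) ^ ((-(((k:ℝ)+1))*θ)*p) = ((2:ℝ) ^ (-(((k:ℝ)+1))*θ)) ^ p :=
            Real.rpow_mul (by norm_num) _ _
        _ ≤ (c k) ^ p := Real.rpow_le_rpow (Real.rpow_pos_of_pos two_pos _).le hb hp.le
    have hreal : (2:ℝ) ^ (-|θ*p|) ≤ ‖ξ‖ ^ (θ * p) * (c k) ^ p := by
      have hmul := mul_le_mul key hckp (Real.rpow_pos_of_pos two_pos _).le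
        (by positivity : (0:ℝ) ≤ ‖ξ‖ ^ (θ*p))
      have heq : (2:ℝ) ^ (-|θ*p|) * (2:ℝ) ^ (((k:ℝ)+1)*(θ*p)) * (2:ℝ) ^ ((-(((k:ℝ)+1))*θ)*p)
          = (2:ℝ) ^ (-|θ*p|) := by
        rw [mul_assoc, ← Real.rpow_add two_pos, ← Real.rpow_add two_pos]
        congr 1
        ring
      rw [heq] at hmul
      exact hmul
    rw [hε]
    calc ENNReal.ofReal ((2:ℝ) ^ (-|θ*p|)) ≤ ENNReal.ofReal (‖ξ‖ ^ (θ*p) * (c k) ^ p) :=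
          ENNReal.ofReal_le_ofReal hreal
      _ = ENNReal.ofReal (‖ξ‖ ^ (θ*p)) * ENNReal.ofReal ((c k) ^ p) :=
          ENNReal.ofReal_mul (by positivity)
      _ = ENNReal.ofReal (‖ξ‖ ^ (θ*p)) * ENNReal.ofReal (c k) ^ p := by
          rw [ENNReal.ofReal_rpow_of_pos hck]
  -- translation invariance: the set integral of the shifted g
  have htrans : ∀ k : ℕ, (∫⁻ ξ in S k, g (ξ - a k)) = I := by
    intro k
    rw [← lintegral_indicator (hSm k)]
    have hind : ∀ ξ : EuclideanSpace ℝ (Fin n),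
        (S k).indicator (fun ξ => g (ξ - a k)) ξ
          = (Metric.closedBall (0 : EuclideanSpace ℝ (Fin n)) (1/2)).indicator g (ξ - a k) := by
      intro ξ
      by_cases hmem : ξ ∈ S k
      · rw [Set.indicator_of_mem hmem, Set.indicator_of_mem]
        simp only [Metric.mem_closedBall, dist_zero_right]
        simpa [hS, Metric.mem_closedBall, dist_eq_norm] using hmem
      · rw [Set.indicator_of_notMem hmem, Set.indicator_of_notMem]
        simp only [Metric.mem_closedBall, dist_zero_right]
        intro hcon
        apply hmem
        simpa [hS, Metric.mem_closedBall, dist_eq_norm] using hcon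
    simp_rw [hind]
    rw [lintegral_sub_right_eq_self
      (fun η => (Metric.closedBall (0 : EuclideanSpace ℝ (Fin n)) (1/2)).indicator g η) (a k)]
    have : (Metric.closedBall (0 : EuclideanSpace ℝ (Fin n)) (1/2)).indicator g = g := by
      apply Set.indicator_eq_self.mpr
      intro η hη
      simp only [Metric.mem_closedBall, dist_zero_right]
      apply hsupp
      simp only [Function.mem_support, hg] at hη
      intro h0
      apply hη
      simp [h0, ENNReal.zero_rpow_of_pos hp]
    rw [this]
  -- set integrals lower bound
  have hset : ∀ k : ℕ, ε * I ≤ ∫⁻ ξ in S k,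
      ENNReal.ofReal (‖ξ‖ ^ (θ * p)) * (‖F ξ‖₊ : ℝ≥0∞) ^ p := by
    intro k
    calc ε * I = ∫⁻ ξ in S k, ε * g (ξ - a k) := by
          rw [lintegral_const_mul' _ _ ENNReal.ofReal_ne_top, htrans k]
      _ ≤ _ := setLIntegral_mono' (hSm k) (fun ξ hξ => hpt k ξ hξ)
  refine eq_top_iff.mpr ?_
  calc (⊤:ℝ≥0∞) = ∑' _ : ℕ, ε * I :=
        (ENNReal.tsum_const_eq_top_of_ne_zero (ENNReal.mul_pos hεpos.ne' hI.ne').ne').symm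
    _ ≤ ∑' k : ℕ, ∫⁻ ξ in S k,
          ENNReal.ofReal (‖ξ‖ ^ (θ * p)) * (‖F ξ‖₊ : ℝ≥0∞) ^ p :=
        ENNReal.tsum_le_tsum hset
    _ = ∫⁻ ξ in ⋃ k, S k,
          ENNReal.ofReal (‖ξ‖ ^ (θ * p)) * (‖F ξ‖₊ : ℝ≥0∞) ^ p :=
        (lintegral_iUnion hSm hdisj _).symm
    _ ≤ _ := setLIntegral_le_lintegral _ _
end

section
/- Let n ≥ 1, 0 < p < ∞, and θ ∈ ℝ. Let ψ be a Schwartz function on ℝⁿ such that 𝓕ψ is not identically zero and supp 𝓕ψ ⊆ {η : 3/4 ≤ |η| ≤ 5/4}. Define F(ξ) := Σ_{k=1}^∞ k^{−1/p} · 2^{−k(n/p + θ)} · 𝓕ψ(2^{−k} ξ); for each ξ at most one term of the sum is nonzero, since the dilated supports lie in pairwise disjoint annuli {3·2^{k−2} ≤ |ξ| ≤ 5·2^{k−2}}. Then ∫_{ℝⁿ} |ξ|^{θp} |F(ξ)|^p dξ = ∞. -/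
open MeasureTheory SchwartzMap Real FourierTransform ENNReal

private noncomputable def s14a (k : ℕ) : ℝ := (2:ℝ) ^ (-((k:ℤ) + 1))

private noncomputable def s14c (n : ℕ) (p θ : ℝ) (k : ℕ) : ℝ :=
  ((k:ℝ) + 1) ^ (-(1/p)) * (2:ℝ) ^ (-(((k:ℝ) + 1)) * (n/p + θ))

private lemma s14a_pos (k : ℕ) : 0 < s14a k := zpow_pos (by norm_num) _

private lemma s14c_pos (n : ℕ) (p θ : ℝ) (k : ℕ) : 0 < s14c n p θ k :=
  mul_pos (Real.rpow_pos_of_pos (by positivity) _) (Real.rpow_pos_of_pos (by norm_num) _)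

private lemma s14a_le {j k : ℕ} (h : j < k) : s14a k ≤ s14a j / 2 := by
  have h2 : s14a j / 2 = (2:ℝ) ^ (-((j:ℤ) + 1) - 1) := by
    rw [s14a, zpow_sub₀ (by norm_num : (2:ℝ) ≠ 0), zpow_one]
  rw [h2, s14a]
  exact (zpow_le_zpow_iff_right₀ (by norm_num : (1:ℝ) < 2)).2 (by omega)

private lemma s14_calc (n : ℕ) (p θ : ℝ) (hp : 0 < p) (k : ℕ) :
    (s14c n p θ k) ^ p * (s14a k) ^ (-(θ * p)) * ((s14a k) ^ n)⁻¹ = ((k:ℝ) + 1)⁻¹ := by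
  rw [s14c, s14a]
  have hK : (0:ℝ) < (k:ℝ) + 1 := by positivity
  have h2 : ((2:ℝ) ^ (-((k:ℤ) + 1))) = (2:ℝ) ^ (-((k:ℝ)+1)) := by
    rw [← Real.rpow_intCast 2 (-((k:ℤ)+1))]
    norm_num
  rw [h2, ← Real.rpow_natCast ((2:ℝ) ^ (-((k:ℝ)+1))) n,
    ← Real.rpow_mul (by norm_num : (0:ℝ) ≤ 2),
    ← Real.rpow_mul (by norm_num : (0:ℝ) ≤ 2),
    ← Real.rpow_neg (by norm_num : (0:ℝ) ≤ 2),
    Real.mul_rpow (Real.rpow_nonneg hK.le _) (Real.rpow_nonneg (by norm_num) _),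
    ← Real.rpow_mul hK.le, ← Real.rpow_mul (by norm_num : (0:ℝ) ≤ 2),
    mul_assoc, mul_assoc,
    ← Real.rpow_add (by norm_num : (0:ℝ) < 2),
    ← Real.rpow_add (by norm_num : (0:ℝ) < 2)]
  have hexp : -(1/p) * p = -1 := by field_simp
  have hexp2 : -((k:ℝ)+1) * (n/p + θ) * p + (-((k:ℝ)+1) * -(θ * p) + -(-((k:ℝ)+1) * (n:ℝ))) = 0 := by
    field_simp; ring
  rw [hexp, hexp2, Real.rpow_zero, mul_one, Real.rpow_neg_one]

private lemma lintegral_comp_smul_haar {E : Type*} [NormedAddCommGroup E] [NormedSpace ℝ E]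
    [MeasurableSpace E] [BorelSpace E] [FiniteDimensional ℝ E] (μ : Measure E)
    [μ.IsAddHaarMeasure] (f : E → ℝ≥0∞) {R : ℝ} (hR : R ≠ 0) :
    ∫⁻ x, f (R • x) ∂μ
      = ENNReal.ofReal |(R ^ Module.finrank ℝ E)⁻¹| * ∫⁻ x, f x ∂μ := by
  calc ∫⁻ x, f (R • x) ∂μ
      = ∫⁻ y, f y ∂(Measure.map (R • ·) μ) :=
        (lintegral_map_equiv f
          (Homeomorph.smul (isUnit_iff_ne_zero.2 hR).unit).toMeasurableEquiv).symm
    _ = ENNReal.ofReal |(R ^ Module.finrank ℝ E)⁻¹| * ∫⁻ x, f x ∂μ := by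
        rw [Measure.map_addHaar_smul μ hR, lintegral_smul_measure, smul_eq_mul]

/-- **Statement 14.** Counterexample for `p < q`: if `𝓕ψ ≠ 0` is supported in the annulus
`{3/4 ≤ |η| ≤ 5/4}` and `F(ξ) = Σ_{k≥1} k^{-1/p} 2^{-k(n/p+θ)} 𝓕ψ(2^{-k} ξ)`, then
`∫ |ξ|^{θp} |F(ξ)|^p dξ = ∞`. -/
theorem stmt14 (n : ℕ) (hn : 1 ≤ n) (p θ : ℝ) (hp : 0 < p)
    (ψ : SchwartzMap (EuclideanSpace ℝ (Fin n)) ℂ)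
    (hψ0 : 𝓕 (⇑ψ) ≠ 0)
    (hsupp : Function.support (𝓕 (⇑ψ)) ⊆
      {η : EuclideanSpace ℝ (Fin n) | 3/4 ≤ ‖η‖ ∧ ‖η‖ ≤ 5/4})
    (F : EuclideanSpace ℝ (Fin n) → ℂ)
    (hF : F = fun ξ => ∑' k : ℕ,
      ((((k:ℝ) + 1) ^ (-(1/p)) * (2:ℝ) ^ (-(((k:ℝ) + 1)) * (n/p + θ)) : ℝ) : ℂ) *
        𝓕 (⇑ψ) ((2:ℝ) ^ (-((k:ℤ) + 1)) • ξ)) :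
    (∫⁻ ξ : EuclideanSpace ℝ (Fin n),
        ENNReal.ofReal (‖ξ‖ ^ (θ * p)) * (‖F ξ‖₊ : ℝ≥0∞) ^ p) = ∞ := by
  classical
  set g : EuclideanSpace ℝ (Fin n) → ℂ := 𝓕 ⇑ψ with hgdef
  have hgc : Continuous g := by
    have hg2 : g = ⇑(SchwartzMap.fourierTransformCLM ℝ ψ) := by
      rw [hgdef]; rfl
    rw [hg2]; exact (SchwartzMap.fourierTransformCLM ℝ ψ).continuous
  have hF' : ∀ ξ, F ξ = ∑' k : ℕ, ((s14c n p θ k : ℝ) : ℂ) * g (s14a k • ξ) := by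
    intro ξ; rw [hF]; simp only [s14c, s14a]
  set S : ℕ → Set (EuclideanSpace ℝ (Fin n)) := fun k => {ξ | g (s14a k • ξ) ≠ 0} with hSdef
  have hSopen : ∀ k, IsOpen (S k) := by
    intro k
    have h1 : S k = (fun ξ => g (s14a k • ξ)) ⁻¹' {0}ᶜ := by
      ext ξ; simp [hSdef]
    rw [h1]
    exact isOpen_compl_singleton.preimage (hgc.comp (continuous_const_smul _))
  have hbound : ∀ k ξ, ξ ∈ S k → 3/4 ≤ s14a k * ‖ξ‖ ∧ s14a k * ‖ξ‖ ≤ 5/4 := by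
    intro k ξ hξ
    have hξ' : g (s14a k • ξ) ≠ 0 := hξ
    have h1 := hsupp (Function.mem_support.2 hξ')
    rwa [Set.mem_setOf_eq, norm_smul, Real.norm_eq_abs, abs_of_pos (s14a_pos k)] at h1
  have hdisjlt : ∀ j k, j < k → Disjoint (S j) (S k) := by
    intro j k hjk
    rw [Set.disjoint_left]
    intro ξ hj hk
    obtain ⟨-, h2⟩ := hbound j ξ hj
    obtain ⟨h3, -⟩ := hbound k ξ hk
    have h5 := mul_le_mul_of_nonneg_right (s14a_le hjk) (norm_nonneg ξ)
    rw [div_mul_eq_mul_div] at h5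
    linarith
  have hdisj : Pairwise (Function.onFun Disjoint S) := by
    intro j k hjk
    rcases lt_or_gt_of_ne hjk with h | h
    · exact hdisjlt j k h
    · exact (hdisjlt k j h).symm
  have hFk : ∀ k ξ, ξ ∈ S k → F ξ = ((s14c n p θ k : ℝ) : ℂ) * g (s14a k • ξ) := by
    intro k ξ hξ
    rw [hF' ξ]
    refine tsum_eq_single k ?_
    intro j hjk
    have hz : g (s14a j • ξ) = 0 := by
      by_contra h
      exact Set.disjoint_left.1 (hdisj hjk) h hξ
    rw [hz, mul_zero]
  set f : EuclideanSpace ℝ (Fin n) → ℝ≥0∞ :=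
    fun η => ENNReal.ofReal (‖η‖ ^ (θ * p)) * (‖g η‖₊ : ℝ≥0∞) ^ p with hfdef
  set C : ℝ≥0∞ := ∫⁻ η, f η with hCdef
  -- positivity of C
  have hCpos : 0 < C := by
    obtain ⟨η₀, hη₀⟩ : ∃ η, g η ≠ 0 := by
      by_contra h
      push_neg at h
      exact hψ0 (funext h)
    have hε : 0 < ‖g η₀‖ := norm_pos_iff.2 hη₀
    set U : Set (EuclideanSpace ℝ (Fin n)) := {η | ‖g η₀‖ / 2 < ‖g η‖} with hUdef
    have hUopen : IsOpen U := isOpen_lt continuous_const hgc.norm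
    have hη₀U : η₀ ∈ U := by
      simp only [hUdef, Set.mem_setOf_eq]; linarith
    have hUne : ∀ η ∈ U, g η ≠ 0 := by
      intro η hη
      have hη' : ‖g η₀‖ / 2 < ‖g η‖ := hη
      exact norm_pos_iff.1 (lt_of_le_of_lt (by positivity) hη')
    set m : ℝ := min ((3/4:ℝ) ^ (θ*p)) ((5/4:ℝ) ^ (θ*p)) with hmdef
    have hm : 0 < m := lt_min (Real.rpow_pos_of_pos (by norm_num) _)
      (Real.rpow_pos_of_pos (by norm_num) _)
    set b : ℝ≥0∞ := ENNReal.ofReal m * (ENNReal.ofReal (‖g η₀‖/2)) ^ p with hbdef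
    have hb : 0 < b := by
      apply ENNReal.mul_pos
      · exact (ENNReal.ofReal_pos.2 hm).ne'
      · exact (ENNReal.rpow_pos (ENNReal.ofReal_pos.2 (by linarith)) ENNReal.ofReal_ne_top).ne'
    have hlow : ∀ η ∈ U, b ≤ f η := by
      intro η hη
      have hη' : ‖g η₀‖ / 2 < ‖g η‖ := hη
      obtain ⟨h34, h54⟩ := hsupp (Function.mem_support.2 (hUne η hη))
      apply mul_le_mul'
      · apply ENNReal.ofReal_le_ofReal
        rcases le_or_gt 0 (θ * p) with hθp | hθp
        · exact (min_le_left _ _).trans (Real.rpow_le_rpow (by norm_num) h34 hθp)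
        · exact (min_le_right _ _).trans (Real.rpow_le_rpow_of_nonpos (by linarith) h54 hθp.le)
      · apply ENNReal.rpow_le_rpow _ hp.le
        rw [← ENNReal.ofReal_coe_nnreal, coe_nnnorm]
        exact ENNReal.ofReal_le_ofReal hη'.le
    calc (0:ℝ≥0∞) < b * volume U :=
          ENNReal.mul_pos hb.ne' (hUopen.measure_pos volume ⟨η₀, hη₀U⟩).ne'
      _ = ∫⁻ _ in U, b := (setLIntegral_const U b).symm
      _ ≤ ∫⁻ η in U, f η := setLIntegral_mono' hUopen.measurableSet hlow
      _ ≤ C := by rw [hCdef]; exact setLIntegral_le_lintegral U f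
  -- per-annulus computation
  have hterm : ∀ k, (∫⁻ ξ in S k,
      ENNReal.ofReal (‖ξ‖ ^ (θ * p)) * (‖F ξ‖₊ : ℝ≥0∞) ^ p)
      = ENNReal.ofReal (((k:ℝ) + 1)⁻¹) * C := by
    intro k
    have ha := s14a_pos k
    have hc := s14c_pos n p θ k
    set T : EuclideanSpace ℝ (Fin n) → ℝ≥0∞ :=
      fun ξ => ENNReal.ofReal ((s14c n p θ k) ^ p * (s14a k) ^ (-(θ * p))) * f (s14a k • ξ)
      with hTdef
    have hTeq : ∀ ξ, ξ ∈ S k →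
        ENNReal.ofReal (‖ξ‖ ^ (θ * p)) * (‖F ξ‖₊ : ℝ≥0∞) ^ p = T ξ := by
      intro ξ hξ
      have hnn : ((‖((s14c n p θ k : ℝ):ℂ) * g (s14a k • ξ)‖₊ : ℝ≥0∞)) ^ p
          = ENNReal.ofReal ((s14c n p θ k) ^ p) * (‖g (s14a k • ξ)‖₊ : ℝ≥0∞) ^ p := by
        rw [nnnorm_mul, ENNReal.coe_mul, ENNReal.mul_rpow_of_nonneg _ _ hp.le,
          Complex.nnnorm_real, ← enorm_eq_nnnorm (s14c n p θ k), Real.enorm_eq_ofReal hc.le, ← ENNReal.ofReal_rpow_of_pos hc]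
      have hnorm : ‖s14a k • ξ‖ ^ (θ * p) = (s14a k) ^ (θ * p) * ‖ξ‖ ^ (θ * p) := by
        rw [norm_smul, Real.norm_eq_abs, abs_of_pos ha, Real.mul_rpow ha.le (norm_nonneg ξ)]
      have hcancel : ENNReal.ofReal ((s14a k) ^ (-(θ * p))) *
          ENNReal.ofReal ((s14a k) ^ (θ * p)) = 1 := by
        rw [← ENNReal.ofReal_mul (Real.rpow_nonneg ha.le _), ← Real.rpow_add ha,
          neg_add_cancel, Real.rpow_zero, ENNReal.ofReal_one]
      rw [hFk k ξ hξ, hnn, hTdef]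
      simp only [hfdef]
      rw [hnorm, ENNReal.ofReal_mul (Real.rpow_nonneg ha.le _),
        ENNReal.ofReal_mul (Real.rpow_nonneg hc.le _)]
      calc ENNReal.ofReal (‖ξ‖ ^ (θ * p)) *
            (ENNReal.ofReal ((s14c n p θ k) ^ p) * (‖g (s14a k • ξ)‖₊ : ℝ≥0∞) ^ p)
          = (ENNReal.ofReal ((s14a k) ^ (-(θ * p))) * ENNReal.ofReal ((s14a k) ^ (θ * p))) *
            (ENNReal.ofReal (‖ξ‖ ^ (θ * p)) *
              (ENNReal.ofReal ((s14c n p θ k) ^ p) * (‖g (s14a k • ξ)‖₊ : ℝ≥0∞) ^ p)) := by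
            rw [hcancel, one_mul]
        _ = ENNReal.ofReal ((s14c n p θ k) ^ p) * ENNReal.ofReal ((s14a k) ^ (-(θ * p))) *
            (ENNReal.ofReal ((s14a k) ^ (θ * p)) * ENNReal.ofReal (‖ξ‖ ^ (θ * p)) *
              (‖g (s14a k • ξ)‖₊ : ℝ≥0∞) ^ p) := by ring
    have hT0 : ∀ ξ, ξ ∉ S k → T ξ = 0 := by
      intro ξ hξ
      have hz : g (s14a k • ξ) = 0 := not_not.1 hξ
      simp [hTdef, hfdef, hz, ENNReal.zero_rpow_of_pos hp]
    calc (∫⁻ ξ in S k, ENNReal.ofReal (‖ξ‖ ^ (θ * p)) * (‖F ξ‖₊ : ℝ≥0∞) ^ p)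
        = ∫⁻ ξ in S k, T ξ :=
          setLIntegral_congr_fun (hSopen k).measurableSet hTeq
      _ = ∫⁻ ξ, T ξ := by
          rw [← lintegral_indicator (hSopen k).measurableSet]
          apply lintegral_congr
          intro ξ
          by_cases hξ : ξ ∈ S k
          · rw [Set.indicator_of_mem hξ]
          · rw [Set.indicator_of_notMem hξ, hT0 ξ hξ]
      _ = ENNReal.ofReal ((s14c n p θ k) ^ p * (s14a k) ^ (-(θ * p))) *
            ∫⁻ ξ, f (s14a k • ξ) := lintegral_const_mul' _ _ ENNReal.ofReal_ne_top
      _ = ENNReal.ofReal ((s14c n p θ k) ^ p * (s14a k) ^ (-(θ * p))) *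
            (ENNReal.ofReal |((s14a k) ^ Module.finrank ℝ (EuclideanSpace ℝ (Fin n)))⁻¹| * C) := by
          rw [lintegral_comp_smul_haar volume f ha.ne', hCdef]
      _ = ENNReal.ofReal (((k:ℝ) + 1)⁻¹) * C := by
          rw [← mul_assoc, ← ENNReal.ofReal_mul
              (mul_nonneg (Real.rpow_nonneg hc.le _) (Real.rpow_nonneg ha.le _)),
            finrank_euclideanSpace_fin,
            abs_of_pos (inv_pos.2 (pow_pos ha n)), s14_calc n p θ hp k]
  -- divergence of the harmonic series
  have htop : ∑' k : ℕ, ENNReal.ofReal (((k:ℝ) + 1)⁻¹) * C = ⊤ := by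
    rw [ENNReal.tsum_mul_right]
    apply ENNReal.mul_eq_top.2
    right
    refine ⟨?_, hCpos.ne'⟩
    by_contra h
    have h1 : Summable fun k : ℕ => (((k:ℝ) + 1)⁻¹).toNNReal := by
      rw [← ENNReal.tsum_coe_ne_top_iff_summable]
      simpa [ENNReal.ofReal] using h
    have h2 : Summable fun k : ℕ => ((k:ℝ) + 1)⁻¹ :=
      (NNReal.summable_coe.2 h1).congr fun k => Real.coe_toNNReal _ (by positivity)
    have h4 : Summable fun m : ℕ => ((m:ℕ):ℝ)⁻¹ := by
      apply (summable_nat_add_iff 1).1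
      exact h2.congr fun k => by push_cast; ring
    exact Real.not_summable_natCast_inv h4
  refine top_unique ?_
  calc (⊤:ℝ≥0∞) = ∑' k : ℕ, ENNReal.ofReal (((k:ℝ) + 1)⁻¹) * C := htop.symm
    _ = ∑' k : ℕ, ∫⁻ ξ in S k,
          ENNReal.ofReal (‖ξ‖ ^ (θ * p)) * (‖F ξ‖₊ : ℝ≥0∞) ^ p :=
        tsum_congr fun k => (hterm k).symm
    _ = ∫⁻ ξ in ⋃ k, S k, ENNReal.ofReal (‖ξ‖ ^ (θ * p)) * (‖F ξ‖₊ : ℝ≥0∞) ^ p :=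
        (lintegral_iUnion (fun k => (hSopen k).measurableSet) hdisj _).symm
    _ ≤ ∫⁻ ξ, ENNReal.ofReal (‖ξ‖ ^ (θ * p)) * (‖F ξ‖₊ : ℝ≥0∞) ^ p :=
        setLIntegral_le_lintegral _ _
end
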